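/- Let n ≥ 1 be an integer, Δ > 0, T = nΔ, h_1, h_2 ∈ (0, 1), and A > 0, ρ > 0. Let k : {0, …, n−1} → ℝ satisfy: (i) |k(j)| ≤ A/(h_1 h_2) for all j; (ii) |k(j)| ≤ A(1/(jΔ) + 1) for all j ≥ 1; (iii) |k(j)| ≤ (A/(h_1 h_2)²)·e^{−ρ j Δ} for all j. Then there exist constants C > 0 and T_0 > 0, depending only on A and ρ, such that for all T ≥ T_0: (Δ²/T²)·∑_{j=0}^{n−1} (n − j)|k(j)| ≤ (C/T)·(1 + |log h_1| + |log h_2|) + (C/T)·Δ/(h_1 h_2). -/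

import Mathlib

open Finset

set_option maxHeartbeats 1000000

lemma core_sum_bound (A ρ Δ δ : ℝ) (hA : 0 < A) (hρ : 0 < ρ) (hΔ : 0 < Δ)
    (hδ0 : 0 < δ) (hδ1 : δ < 1) (n : ℕ) (hn : 1 ≤ n) (k : ℕ → ℝ)
    (hk1 : ∀ j, j < n → |k j| ≤ A / δ)
    (hk2 : ∀ j, 1 ≤ j → j < n → |k j| ≤ A * (1 / ((j : ℝ) * Δ) + 1))
    (hk3 : ∀ j, j < n → |k j| ≤ (A / δ ^ 2) * Real.exp (-ρ * (j : ℝ) * Δ)) :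
    Δ * ∑ j ∈ range n, |k j| ≤
      (A * (9 + 9 / ρ)) * (1 + (-Real.log δ)) + (A * (9 + 9 / ρ)) * (Δ / δ) := by
  classical
  set L : ℝ := -Real.log δ with hLdef
  have hL0 : 0 ≤ L := by
    have := Real.log_neg hδ0 hδ1
    simp only [hLdef]; linarith
  set M : ℝ := 2 / ρ * L with hMdef
  have hM0 : 0 ≤ M := by positivity
  set a : ℕ := ⌊δ / Δ⌋₊ with hadef
  set b : ℕ := ⌊(δ + M) / Δ⌋₊ with hbdef
  have hab : a ≤ b := Nat.floor_mono (by gcongr; linarith)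
  -- basic numeric facts
  have haR : (a : ℝ) ≤ δ / Δ := Nat.floor_le (by positivity)
  have haR' : δ / Δ < (a : ℝ) + 1 := Nat.lt_floor_add_one _
  have hbR : (b : ℝ) ≤ (δ + M) / Δ := Nat.floor_le (by positivity)
  have hbR' : (δ + M) / Δ < (b : ℝ) + 1 := Nat.lt_floor_add_one _
  have haΔ : δ < ((a : ℝ) + 1) * Δ := by
    rw [div_lt_iff₀ hΔ] at haR'; linarith
  have hbΔ : (b : ℝ) * Δ ≤ δ + M := by
    rw [le_div_iff₀ hΔ] at hbR; linarith
  have hbΔ' : δ + M < ((b : ℝ) + 1) * Δ := by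
    rw [div_lt_iff₀ hΔ] at hbR'; linarith
  -- split off j = 0
  have hsplit0 : ∑ j ∈ range n, |k j| = |k 0| + ∑ j ∈ Ico 1 n, |k j| := by
    rw [range_eq_Ico, Finset.sum_eq_sum_Ico_succ_bot hn]
  -- split Ico 1 n into three regions
  set P : ℕ → Prop := fun j => (j : ℝ) * Δ ≤ δ with hPdef
  set Q : ℕ → Prop := fun j => (j : ℝ) * Δ ≤ δ + M with hQdef
  have e1 := Finset.sum_filter_add_sum_filter_not (Ico 1 n) P (fun j => |k j|)
  have e2 := Finset.sum_filter_add_sum_filter_not ((Ico 1 n).filter (fun j => ¬ P j)) Q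
    (fun j => |k j|)
  -- Region 1
  have hT1 : ∑ j ∈ (Ico 1 n).filter P, |k j| ≤ (a : ℝ) * (A / δ) := by
    calc ∑ j ∈ (Ico 1 n).filter P, |k j| ≤ ∑ _j ∈ (Ico 1 n).filter P, (A / δ) := by
          refine sum_le_sum fun j hj => ?_
          exact hk1 j (mem_Ico.1 (mem_filter.1 hj).1).2
      _ = ((Ico 1 n).filter P).card * (A / δ) := by rw [sum_const, nsmul_eq_mul]
      _ ≤ (a : ℝ) * (A / δ) := by
          have hsub : (Ico 1 n).filter P ⊆ Icc 1 a := by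
            intro j hj
            obtain ⟨hj1, hjP⟩ := mem_filter.1 hj
            refine mem_Icc.2 ⟨(mem_Ico.1 hj1).1, Nat.le_floor ?_⟩
            rw [le_div_iff₀ hΔ]
            exact hjP
          have hcard : ((Ico 1 n).filter P).card ≤ a := by
            have := Finset.card_le_card hsub
            simpa [Nat.card_Icc] using this
          have : (((Ico 1 n).filter P).card : ℝ) ≤ (a : ℝ) := by exact_mod_cast hcard
          exact mul_le_mul_of_nonneg_right this (by positivity)
  -- Region 2
  have hF2sub : ((Ico 1 n).filter (fun j => ¬ P j)).filter Q ⊆ Icc (a + 1) b := by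
    intro j hj
    obtain ⟨hj', hjQ⟩ := mem_filter.1 hj
    obtain ⟨_, hjP⟩ := mem_filter.1 hj'
    refine mem_Icc.2 ⟨?_, Nat.le_floor (by rw [le_div_iff₀ hΔ]; exact hjQ)⟩
    have : δ / Δ < (j : ℝ) := by
      rw [div_lt_iff₀ hΔ]
      exact lt_of_not_ge hjP
    exact Nat.succ_le_of_lt (Nat.floor_lt (by positivity) |>.2 this)
  have hT2 : ∑ j ∈ ((Ico 1 n).filter (fun j => ¬ P j)).filter Q, |k j|
      ≤ A * (∑ j ∈ Icc (a + 1) b, 1 / ((j : ℝ) * Δ)) + A * ((b : ℝ) - a) := by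
    calc ∑ j ∈ ((Ico 1 n).filter (fun j => ¬ P j)).filter Q, |k j|
        ≤ ∑ j ∈ ((Ico 1 n).filter (fun j => ¬ P j)).filter Q, A * (1 / ((j : ℝ) * Δ) + 1) := by
          refine sum_le_sum fun j hj => ?_
          obtain ⟨hj', _⟩ := mem_filter.1 hj
          obtain ⟨hj1, _⟩ := mem_filter.1 hj'
          exact hk2 j (mem_Ico.1 hj1).1 (mem_Ico.1 hj1).2
      _ ≤ ∑ j ∈ Icc (a + 1) b, A * (1 / ((j : ℝ) * Δ) + 1) := by
          refine sum_le_sum_of_subset_of_nonneg hF2sub fun j _ _ => ?_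
          have : (0:ℝ) ≤ 1 / ((j : ℝ) * Δ) := by positivity
          have : (0:ℝ) ≤ 1 / ((j : ℝ) * Δ) + 1 := by linarith
          positivity
      _ = A * (∑ j ∈ Icc (a + 1) b, 1 / ((j : ℝ) * Δ)) + A * ((Icc (a+1) b).card : ℝ) := by
          rw [← mul_sum, sum_add_distrib, sum_const, nsmul_eq_mul, mul_one, mul_add]
      _ ≤ _ := by
          have : ((Icc (a+1) b).card : ℝ) = (b : ℝ) - a := by
            rw [Nat.card_Icc]
            have : b + 1 - (a + 1) = b - a := by omega
            rw [this, Nat.cast_sub hab]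
          rw [this]
  -- harmonic-type bound for region 2
  have hDsum : Δ * ∑ j ∈ Icc (a + 1) b, 1 / ((j : ℝ) * Δ) = ∑ j ∈ Icc (a + 1) b, ((j : ℝ))⁻¹ := by
    rw [mul_sum]
    refine sum_congr rfl fun j hj => ?_
    have hj1 : a + 1 ≤ j := (mem_Icc.1 hj).1
    have hjpos : (0:ℝ) < (j : ℝ) := by exact_mod_cast Nat.pos_of_ne_zero (by omega)
    have hj0 : (j : ℝ) ≠ 0 := ne_of_gt hjpos
    have hΔ0 : Δ ≠ 0 := ne_of_gt hΔ
    field_simp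
  have hH : ∑ j ∈ Icc (a + 1) b, ((j : ℝ))⁻¹ ≤ 1 + (M + L) := by
    rcases eq_or_lt_of_le hab with heq | hlt
    · rw [← heq, Finset.Icc_eq_empty (by omega), sum_empty]
      linarith
    · have hb1 : 1 ≤ b := by omega
      have hcast : ∑ j ∈ Icc (a + 1) b, ((j : ℝ))⁻¹
          = ((harmonic b : ℚ) : ℝ) - ((harmonic a : ℚ) : ℝ) := by
        have hhb : ((harmonic b : ℚ) : ℝ) = ∑ j ∈ Icc 1 b, ((j : ℝ))⁻¹ := by
          rw [harmonic_eq_sum_Icc]; push_cast; ring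
        have hha : ((harmonic a : ℚ) : ℝ) = ∑ j ∈ Icc 1 a, ((j : ℝ))⁻¹ := by
          rw [harmonic_eq_sum_Icc]; push_cast; ring
        have hcons := Finset.sum_Ioc_consecutive (fun j : ℕ => ((j : ℝ))⁻¹)
          (Nat.zero_le a) hab
        rw [hhb, hha]
        rw [show Icc 1 b = Ioc 0 b from Finset.Icc_succ_left_eq_Ioc 0 b, show Icc 1 a = Ioc 0 a from
          Finset.Icc_succ_left_eq_Ioc 0 a, show Icc (a+1) b = Ioc a b from Finset.Icc_succ_left_eq_Ioc a b]
        linarith [hcons]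
      rw [hcast]
      have hub : ((harmonic b : ℚ) : ℝ) ≤ 1 + Real.log b := harmonic_le_one_add_log b
      have hlb : Real.log ((a : ℝ) + 1) ≤ ((harmonic a : ℚ) : ℝ) := by
        have := log_add_one_le_harmonic a
        push_cast at this ⊢
        linarith
      have hbpos : (0:ℝ) < (b : ℝ) := by exact_mod_cast hb1
      have hlog : Real.log (b : ℝ) - Real.log ((a : ℝ) + 1) ≤ M + L := by
        rw [← Real.log_div (ne_of_gt hbpos) (by positivity)]
        have hratio : (b : ℝ) / ((a : ℝ) + 1) ≤ (δ + M) / δ := by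
          rw [div_le_div_iff₀ (by positivity) hδ0]
          have h1 : (b : ℝ) * Δ * δ ≤ (δ + M) * δ := mul_le_mul_of_nonneg_right hbΔ hδ0.le
          have h2 : (δ + M) * δ ≤ (δ + M) * (((a : ℝ) + 1) * Δ) :=
            mul_le_mul_of_nonneg_left haΔ.le (by linarith)
          have h3' : ((b : ℝ) * δ) * Δ ≤ ((δ + M) * ((a : ℝ) + 1)) * Δ := by nlinarith [h1, h2]
          exact le_of_mul_le_mul_right h3' hΔ
        have hlog1 : Real.log ((b : ℝ) / ((a : ℝ) + 1)) ≤ Real.log ((δ + M) / δ) :=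
          Real.log_le_log (by positivity) hratio
        have hlog2 : Real.log ((δ + M) / δ) = Real.log (δ + M) - Real.log δ :=
          Real.log_div (by positivity) (ne_of_gt hδ0)
        have h4 : Real.log (δ + M) ≤ Real.log (1 + M) :=
          Real.log_le_log (by positivity) (by linarith)
        have h5 : Real.log (1 + M) ≤ M := by
          have := Real.log_le_sub_one_of_pos (show (0:ℝ) < 1 + M by linarith)
          linarith
        simp only [hLdef] at *
        linarith
      linarith
  -- Region 3
  set r : ℝ := Real.exp (-(ρ * Δ)) with hrdef
  have hr0 : 0 < r := Real.exp_pos _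
  have hr1 : r < 1 := Real.exp_lt_one_iff.2 (by nlinarith)
  have hF3sub : ((Ico 1 n).filter (fun j => ¬ P j)).filter (fun j => ¬ Q j) ⊆ Ico (b + 1) n := by
    intro j hj
    obtain ⟨hj', hjQ⟩ := mem_filter.1 hj
    obtain ⟨hj1, _⟩ := mem_filter.1 hj'
    refine mem_Ico.2 ⟨?_, (mem_Ico.1 hj1).2⟩
    have hlt : (δ + M) / Δ < (j : ℝ) := by
      rw [div_lt_iff₀ hΔ]
      exact lt_of_not_ge hjQ
    exact Nat.succ_le_of_lt (Nat.floor_lt (by positivity) |>.2 hlt)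
  have hT3 : ∑ j ∈ ((Ico 1 n).filter (fun j => ¬ P j)).filter (fun j => ¬ Q j), |k j|
      ≤ (A / δ ^ 2) * (r ^ (b + 1) / (1 - r)) := by
    calc ∑ j ∈ ((Ico 1 n).filter (fun j => ¬ P j)).filter (fun j => ¬ Q j), |k j|
        ≤ ∑ j ∈ ((Ico 1 n).filter (fun j => ¬ P j)).filter (fun j => ¬ Q j), (A / δ ^ 2) * r ^ j := by
          refine sum_le_sum fun j hj => ?_
          have hjn : j < n := (mem_Ico.1 (mem_filter.1 (mem_filter.1 hj).1).1).2
          have h := hk3 j hjn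
          have hre : Real.exp (-ρ * (j : ℝ) * Δ) = r ^ j := by
            rw [hrdef, ← Real.exp_nat_mul]
            congr 1
            ring
          rwa [hre] at h
      _ = (A / δ ^ 2) * ∑ j ∈ ((Ico 1 n).filter (fun j => ¬ P j)).filter (fun j => ¬ Q j), r ^ j :=
          (mul_sum _ _ _).symm
      _ ≤ (A / δ ^ 2) * ∑ j ∈ Ico (b + 1) n, r ^ j := by
          refine mul_le_mul_of_nonneg_left ?_ (by positivity)
          exact sum_le_sum_of_subset_of_nonneg hF3sub fun j _ _ => by positivity
      _ ≤ (A / δ ^ 2) * (r ^ (b + 1) / (1 - r)) :=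
          mul_le_mul_of_nonneg_left (geom_sum_Ico_le_of_lt_one hr0.le hr1) (by positivity)
  have hrpow : r ^ (b + 1) ≤ δ ^ 2 := by
    have h1 : r ^ (b + 1) = Real.exp (((b : ℝ) + 1) * (-(ρ * Δ))) := by
      rw [hrdef, ← Real.exp_nat_mul]
      congr 1
      push_cast
      ring
    have h2 : ((b : ℝ) + 1) * (-(ρ * Δ)) ≤ -(ρ * M) := by
      have : M ≤ ((b : ℝ) + 1) * Δ := by linarith
      nlinarith [hρ]
    have h3 : -(ρ * M) = 2 * Real.log δ := by
      rw [hMdef, hLdef]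
      field_simp
    have h4 : Real.exp (2 * Real.log δ) = δ ^ 2 := by
      rw [show (2:ℝ) * Real.log δ = Real.log (δ ^ 2) by rw [Real.log_pow]; push_cast; ring,
        Real.exp_log (by positivity)]
    calc r ^ (b + 1) = Real.exp (((b : ℝ) + 1) * (-(ρ * Δ))) := h1
      _ ≤ Real.exp (-(ρ * M)) := Real.exp_le_exp.2 h2
      _ = δ ^ 2 := by rw [h3, h4]
  have h1mr : ρ * Δ / (1 + ρ * Δ) ≤ 1 - r := by
    have hE : 1 + ρ * Δ ≤ Real.exp (ρ * Δ) := by linarith [Real.add_one_le_exp (ρ * Δ)]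
    have hrinv : r = (Real.exp (ρ * Δ))⁻¹ := by rw [hrdef, ← Real.exp_neg]
    have hinv : (Real.exp (ρ * Δ))⁻¹ ≤ (1 + ρ * Δ)⁻¹ :=
      inv_anti₀ (by positivity) hE
    have heq : ρ * Δ / (1 + ρ * Δ) = 1 - (1 + ρ * Δ)⁻¹ := by
      field_simp
      ring
    rw [hrinv]
    linarith
  have h1mrpos : (0:ℝ) < 1 - r := lt_of_lt_of_le (by positivity) h1mr
  have hΔr : Δ / (1 - r) ≤ 1 / ρ + Δ := by
    rw [div_le_iff₀ h1mrpos]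
    have hmul := mul_le_mul_of_nonneg_left h1mr (show (0:ℝ) ≤ 1 / ρ + Δ by positivity)
    have heq2 : (1 / ρ + Δ) * (ρ * Δ / (1 + ρ * Δ)) = Δ := by
      field_simp
    linarith
  -- assemble
  have habs0 : Δ * |k 0| ≤ A * (Δ / δ) := by
    have := hk1 0 (by omega)
    have h := mul_le_mul_of_nonneg_left this hΔ.le
    calc Δ * |k 0| ≤ Δ * (A / δ) := h
      _ = A * (Δ / δ) := by ring
  have hP1 : Δ * ((a : ℝ) * (A / δ)) ≤ A := by
    have h := mul_le_mul_of_nonneg_right haR (show (0:ℝ) ≤ A / δ by positivity)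
    have h2 := mul_le_mul_of_nonneg_left h hΔ.le
    calc Δ * ((a : ℝ) * (A / δ)) ≤ Δ * (δ / Δ * (A / δ)) := h2
      _ = A := by field_simp
  have hcount : ((b : ℝ) - a) * Δ ≤ M + Δ := by nlinarith [hbΔ, haΔ]
  have hQ1 : Δ * (A * (∑ j ∈ Icc (a + 1) b, 1 / ((j : ℝ) * Δ)) + A * ((b : ℝ) - a))
      ≤ A * (1 + (M + L)) + A * (M + Δ) := by
    have hs : Δ * (∑ j ∈ Icc (a + 1) b, 1 / ((j : ℝ) * Δ)) ≤ 1 + (M + L) := by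
      rw [hDsum]; exact hH
    have hc : Δ * ((b : ℝ) - a) ≤ M + Δ := by linarith [hcount]
    nlinarith [hA, hs, hc]
  have hQ3 : Δ * ((A / δ ^ 2) * (r ^ (b + 1) / (1 - r))) ≤ A * (1 / ρ + Δ) := by
    have hstep : r ^ (b + 1) / (1 - r) ≤ δ ^ 2 / (1 - r) := by
      gcongr
    have h2 : Δ * ((A / δ ^ 2) * (r ^ (b + 1) / (1 - r))) ≤ Δ * ((A / δ ^ 2) * (δ ^ 2 / (1 - r))) := by
      gcongr
    have h3 : Δ * ((A / δ ^ 2) * (δ ^ 2 / (1 - r))) = A * (Δ / (1 - r)) := by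
      field_simp
    have h4 : A * (Δ / (1 - r)) ≤ A * (1 / ρ + Δ) := mul_le_mul_of_nonneg_left hΔr hA.le
    linarith
  -- put everything together
  have hx0 : (0:ℝ) ≤ Δ / δ := by positivity
  have hΔx : Δ ≤ Δ / δ := by
    rw [le_div_iff₀ hδ0]
    nlinarith
  have htot : Δ * ∑ j ∈ range n, |k j|
      ≤ A * (Δ / δ) + A + (A * (1 + (M + L)) + A * (M + Δ)) + A * (1 / ρ + Δ) := by
    have hsum_eq : ∑ j ∈ range n, |k j|
        = |k 0| + ((∑ j ∈ (Ico 1 n).filter P, |k j|)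
          + ((∑ j ∈ ((Ico 1 n).filter (fun j => ¬ P j)).filter Q, |k j|)
            + ∑ j ∈ ((Ico 1 n).filter (fun j => ¬ P j)).filter (fun j => ¬ Q j), |k j|)) := by
      rw [hsplit0]
      linarith [e1, e2]
    rw [hsum_eq]
    have m1 := mul_le_mul_of_nonneg_left hT1 hΔ.le
    have m2 := mul_le_mul_of_nonneg_left hT2 hΔ.le
    have m3 := mul_le_mul_of_nonneg_left hT3 hΔ.le
    have m2' : Δ * (A * (∑ j ∈ Icc (a + 1) b, 1 / ((j : ℝ) * Δ)) + A * ((b : ℝ) - a))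
        ≤ A * (1 + (M + L)) + A * (M + Δ) := hQ1
    linarith [habs0, hP1, m1, m2, m3, hQ3, m2']
  clear_value L M a b r
  have e1 : (A * (9 + 9 / ρ)) * (1 + L) + (A * (9 + 9 / ρ)) * (Δ / δ)
      = 9*A + 9*(A/ρ) + 9*(A*L) + 9*(A/ρ*L) + 9*(A*(Δ/δ)) + 9*(A/ρ*(Δ/δ)) := by ring
  have e2 : A * (Δ / δ) + A + (A * (1 + (M + L)) + A * (M + Δ)) + A * (1 / ρ + Δ)
      = A*(Δ/δ) + 2*A + 2*(A*M) + A*L + 2*(A*Δ) + A/ρ := by ring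
  have e3 : 2*(A*M) = 4*(A/ρ*L) := by rw [hMdef]; ring
  rw [e1]
  linarith [htot, e2, e3, mul_nonneg hA.le hL0, mul_nonneg (div_nonneg hA.le hρ.le) hL0,
    mul_nonneg hA.le hx0, mul_nonneg (div_nonneg hA.le hρ.le) hx0,
    mul_le_mul_of_nonneg_left hΔx hA.le, div_nonneg hA.le hρ.le, hA.le]

/-- Deterministic summation core of the variance bound in dimension `d = 2`: if `k(j)`
satisfies the three covariance bounds (i)–(iii), then
`(Δ²/T²)·∑_{j<n} (n − j)|k(j)| ≤ (C/T)(1 + |log h₁| + |log h₂|) + (C/T)·Δ/(h₁h₂)`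
with `T = nΔ`, for constants `C, T₀` depending only on `A, ρ`. -/
theorem discrete_variance_sum_bound_dim2 (A ρ : ℝ) (hA : 0 < A) (hρ : 0 < ρ) :
    ∃ C > (0:ℝ), ∃ T0 > (0:ℝ),
      ∀ (n : ℕ), 1 ≤ n → ∀ (Δ : ℝ), 0 < Δ →
      ∀ (h₁ h₂ : ℝ), h₁ ∈ Set.Ioo (0:ℝ) 1 → h₂ ∈ Set.Ioo (0:ℝ) 1 →
      ∀ (k : ℕ → ℝ),
        (∀ j, j < n → |k j| ≤ A / (h₁ * h₂)) →
        (∀ j, 1 ≤ j → j < n → |k j| ≤ A * (1 / ((j : ℝ) * Δ) + 1)) →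
        (∀ j, j < n → |k j| ≤ (A / (h₁ * h₂) ^ 2) * Real.exp (-ρ * (j : ℝ) * Δ)) →
        T0 ≤ (n : ℝ) * Δ →
        Δ ^ 2 / ((n : ℝ) * Δ) ^ 2 * ∑ j ∈ Finset.range n, ((n : ℝ) - (j : ℝ)) * |k j|
          ≤ C / ((n : ℝ) * Δ) * (1 + |Real.log h₁| + |Real.log h₂|)
            + C / ((n : ℝ) * Δ) * (Δ / (h₁ * h₂)) := by
  refine ⟨A * (9 + 9 / ρ), by positivity, 1, one_pos, ?_⟩
  intro n hn Δ hΔ h₁ h₂ hh₁ hh₂ k hk1 hk2 hk3 hT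
  obtain ⟨h₁0, h₁1⟩ := hh₁
  obtain ⟨h₂0, h₂1⟩ := hh₂
  have hδ0 : 0 < h₁ * h₂ := mul_pos h₁0 h₂0
  have hδ1 : h₁ * h₂ < 1 := by nlinarith
  have key := core_sum_bound A ρ Δ (h₁ * h₂) hA hρ hΔ hδ0 hδ1 n hn k hk1 hk2 hk3
  have hnpos : (0:ℝ) < (n : ℝ) := by exact_mod_cast hn
  have hTpos : (0:ℝ) < (n : ℝ) * Δ := mul_pos hnpos hΔ
  have hLabs : -Real.log (h₁ * h₂) = |Real.log h₁| + |Real.log h₂| := by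
    rw [Real.log_mul (ne_of_gt h₁0) (ne_of_gt h₂0),
      abs_of_neg (Real.log_neg h₁0 h₁1), abs_of_neg (Real.log_neg h₂0 h₂1)]
    ring
  set C : ℝ := A * (9 + 9 / ρ) with hCdef
  have hsum : ∑ j ∈ Finset.range n, ((n : ℝ) - (j : ℝ)) * |k j|
      ≤ (n : ℝ) * ∑ j ∈ Finset.range n, |k j| := by
    rw [Finset.mul_sum]
    refine Finset.sum_le_sum fun j _ => ?_
    have hj0 : (0:ℝ) ≤ (j : ℝ) := Nat.cast_nonneg j
    exact mul_le_mul_of_nonneg_right (by linarith) (abs_nonneg _)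
  have step1 : Δ ^ 2 / ((n : ℝ) * Δ) ^ 2 * ∑ j ∈ Finset.range n, ((n : ℝ) - (j : ℝ)) * |k j|
      ≤ Δ ^ 2 / ((n : ℝ) * Δ) ^ 2 * ((n : ℝ) * ∑ j ∈ Finset.range n, |k j|) :=
    mul_le_mul_of_nonneg_left hsum (by positivity)
  have step2 : Δ ^ 2 / ((n : ℝ) * Δ) ^ 2 * ((n : ℝ) * ∑ j ∈ Finset.range n, |k j|)
      = (Δ * ∑ j ∈ Finset.range n, |k j|) / ((n : ℝ) * Δ) := by
    field_simp
  have step3 : (Δ * ∑ j ∈ Finset.range n, |k j|) / ((n : ℝ) * Δ)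
      ≤ (C * (1 + (-Real.log (h₁ * h₂))) + C * (Δ / (h₁ * h₂))) / ((n : ℝ) * Δ) := by
    gcongr
  have step4 : (C * (1 + (-Real.log (h₁ * h₂))) + C * (Δ / (h₁ * h₂))) / ((n : ℝ) * Δ)
      = C / ((n : ℝ) * Δ) * (1 + |Real.log h₁| + |Real.log h₂|)
        + C / ((n : ℝ) * Δ) * (Δ / (h₁ * h₂)) := by
    rw [hLabs]
    field_simp
    ring
  calc Δ ^ 2 / ((n : ℝ) * Δ) ^ 2 * ∑ j ∈ Finset.range n, ((n : ℝ) - (j : ℝ)) * |k j|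
      ≤ Δ ^ 2 / ((n : ℝ) * Δ) ^ 2 * ((n : ℝ) * ∑ j ∈ Finset.range n, |k j|) := step1
    _ = (Δ * ∑ j ∈ Finset.range n, |k j|) / ((n : ℝ) * Δ) := step2
    _ ≤ (C * (1 + (-Real.log (h₁ * h₂))) + C * (Δ / (h₁ * h₂))) / ((n : ℝ) * Δ) := step3
    _ = _ := step4
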